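/- Let I be a semi-graphoid on a finite set V, π a linear order on V, and G^π the permutation-induced DAG. Then G^π is subgraph-minimal among DAGs with topological order π satisfying the ordered Markov property: there is no proper subgraph H of G^π (same vertices, strictly fewer edges, each vertex's parent set in H contained in its parent set in G^π) such that for every v ∈ V, I({v}, Pre(v) \ Pa_H(v), Pa_H(v)) holds. -/
import Mathlib


/-- Three pairwise disjoint finsets. -/
def PairwiseDisj {V : Type*} [DecidableEq V] (A B S : Finset V) : Prop :=
  Disjoint A B ∧ Disjoint A S ∧ Disjoint B S

/-- A semi-graphoid: a ternary relation on pairwise disjoint finsets satisfying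
symmetry, decomposition, weak union and contraction. -/
structure SemiGraphoid (V : Type*) [DecidableEq V] where
  I : Finset V → Finset V → Finset V → Prop
  symm : ∀ A B S, PairwiseDisj A B S → I A B S → I B A S
  decomposition : ∀ A B C S, PairwiseDisj A (B ∪ C) S → I A (B ∪ C) S → I A B S
  weakUnion : ∀ A B C S, PairwiseDisj A (B ∪ C) S → I A (B ∪ C) S → I A B (S ∪ C)
  contraction : ∀ A B C S, PairwiseDisj A B (S ∪ C) → PairwiseDisj A C S →
    I A B (S ∪ C) → I A C S → I A (B ∪ C) S

/-- The set of vertices strictly preceding `v` in the linear order given by `π`. -/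
def Pre {V : Type*} [Fintype V] (π : V → ℕ) (v : V) : Finset V :=
  Finset.univ.filter (fun u => π u < π v)

/-- The permutation-induced DAG `G^π` is subgraph minimal among DAGs with
topological order `π` satisfying the ordered Markov property: no proper subgraph
(described by its parent sets) satisfies the ordered Markov property. -/
theorem stmt5 {V : Type*} [Fintype V] [DecidableEq V] (SG : SemiGraphoid V)
    (π : V → ℕ) (hinj : Function.Injective π)
    (Pa : V → Finset V)
    (hPa : ∀ v u, u ∈ Pa v ↔ π u < π v ∧ ¬ SG.I {v} {u} (Pre π v \ {u})) :
    ¬ ∃ PaH : V → Finset V, (∀ v, PaH v ⊆ Pa v) ∧ (∃ v, PaH v ⊂ Pa v) ∧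
      (∀ v, SG.I {v} (Pre π v \ PaH v) (PaH v)) := by
  rintro ⟨PaH, hsub, ⟨v, hv⟩, hMarkov⟩
  obtain ⟨u, huPa, huH⟩ := Finset.exists_of_ssubset hv
  obtain ⟨hult, hnI⟩ := (hPa v u).mp huPa
  have hPaPre : ∀ w, Pa w ⊆ Pre π w := by
    intro w x hx
    simp only [Pre, Finset.mem_filter, Finset.mem_univ, true_and]
    exact ((hPa w x).mp hx).1
  have hHPre : PaH v ⊆ Pre π v := (hsub v).trans (hPaPre v)
  have hvPre : v ∉ Pre π v := by simp [Pre]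
  have huBC : u ∈ Pre π v \ PaH v := by
    refine Finset.mem_sdiff.mpr ⟨hPaPre v huPa, huH⟩
  have hsplit : {u} ∪ ((Pre π v \ PaH v) \ {u}) = Pre π v \ PaH v := by
    ext x
    simp only [Finset.mem_union, Finset.mem_sdiff, Finset.mem_singleton]
    constructor
    · rintro (rfl | ⟨⟨h1, h2⟩, _⟩)
      · exact Finset.mem_sdiff.mp huBC
      · exact ⟨h1, h2⟩
    · rintro ⟨h1, h2⟩
      by_cases hx : x = u
      · exact Or.inl hx
      · exact Or.inr ⟨⟨h1, h2⟩, hx⟩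
  have hdisj : PairwiseDisj {v} ({u} ∪ ((Pre π v \ PaH v) \ {u})) (PaH v) := by
    rw [hsplit]
    refine ⟨?_, ?_, Finset.sdiff_disjoint⟩
    · simp only [Finset.disjoint_singleton_left, Finset.mem_sdiff, not_and]
      intro h; exact absurd h hvPre
    · simp only [Finset.disjoint_singleton_left]
      exact fun h => hvPre (hHPre h)
  have hwk := SG.weakUnion {v} {u} ((Pre π v \ PaH v) \ {u}) (PaH v) hdisj
    (by rw [hsplit]; exact hMarkov v)
  have hset : PaH v ∪ ((Pre π v \ PaH v) \ {u}) = Pre π v \ {u} := by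
    ext x
    simp only [Finset.mem_union, Finset.mem_sdiff, Finset.mem_singleton]
    constructor
    · rintro (h | ⟨⟨h1, h2⟩, h3⟩)
      · exact ⟨hHPre h, fun hx => huH (hx ▸ h)⟩
      · exact ⟨h1, h3⟩
    · rintro ⟨h1, h2⟩
      by_cases hx : x ∈ PaH v
      · exact Or.inl hx
      · exact Or.inr ⟨⟨h1, hx⟩, h2⟩
  rw [hset] at hwk
  exact hnI hwk
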